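/- Every satisfiable X_a-free lfp-Hyper²LTL_mm sentence has a countable model; in fact, every model T of such a sentence contains a countable subset R ⊆ T that is also a model of the sentence. -/

import Mathlib

namespace Hyper2

/-! ### Traces -/

/-- A trace over atomic propositions `α` is an infinite word over `2^α`. -/
abbrev Trace (α : Type) := ℕ → Set α

/-! ### Second-order (set) variables -/

/-- Second-order variables: the distinguished variable `all` (`Xₐ`, the set of all traces),
the distinguished variable `dis` (`X_d`, the universe of discourse), and named variables. -/
inductive SVar where
  | all : SVar
  | dis : SVar
  | var : ℕ → SVar
deriving DecidableEq

def SVar.code : SVar → ℕ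
  | .all => 0
  | .dis => 1
  | .var n => n + 2

/-! ### Quantifier-free (LTL-like) formulas -/

/-- Quantifier-free formulas: atoms `a_π`, negation, disjunction, next, until. -/
inductive QF (α : Type) where
  | atom : α → ℕ → QF α
  | not : QF α → QF α
  | or : QF α → QF α → QF α
  | next : QF α → QF α
  | untl : QF α → QF α → QF α

variable {α : Type}

/-- Satisfaction of a quantifier-free formula w.r.t. a valuation of trace
variables, at position `i`. -/
def QF.sat (v : ℕ → Trace α) : QF α → ℕ → Prop
  | .atom a π, i => a ∈ v π i
  | .not ψ, i => ¬ QF.sat v ψ i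
  | .or ψ₁ ψ₂, i => QF.sat v ψ₁ i ∨ QF.sat v ψ₂ i
  | .next ψ, i => QF.sat v ψ (i + 1)
  | .untl ψ₁ ψ₂, i => ∃ j, i ≤ j ∧ QF.sat v ψ₂ j ∧ ∀ k, i ≤ k → k < j → QF.sat v ψ₁ k

/-- The trace variables occurring in a quantifier-free formula. -/
def QF.traceVars : QF α → Set ℕ
  | .atom _ π => {π}
  | .not ψ => ψ.traceVars
  | .or ψ₁ ψ₂ => ψ₁.traceVars ∪ ψ₂.traceVars
  | .next ψ => ψ.traceVars
  | .untl ψ₁ ψ₂ => ψ₁.traceVars ∪ ψ₂.traceVars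

/-- The atomic propositions occurring in a quantifier-free formula. -/
def QF.atoms : QF α → Set α
  | .atom a _ => {a}
  | .not ψ => ψ.atoms
  | .or ψ₁ ψ₂ => ψ₁.atoms ∪ ψ₂.atoms
  | .next ψ => ψ.atoms
  | .untl ψ₁ ψ₂ => ψ₁.atoms ∪ ψ₂.atoms

/-- A numerical code for quantifier-free formulas over `AP = ℕ`. -/
def QF.code : QF ℕ → ℕ
  | .atom a π => Nat.pair 0 (Nat.pair a π)
  | .not ψ => Nat.pair 1 ψ.code
  | .or ψ₁ ψ₂ => Nat.pair 2 (Nat.pair ψ₁.code ψ₂.code)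
  | .next ψ => Nat.pair 3 ψ.code
  | .untl ψ₁ ψ₂ => Nat.pair 4 (Nat.pair ψ₁.code ψ₂.code)

/-! ### Variable assignments -/

/-- A variable assignment maps trace variables to traces and
second-order variables to sets of traces. -/
structure Assignment (α : Type) where
  tr : ℕ → Trace α
  so : SVar → Set (Trace α)

/-- Update the value of a trace variable. -/
def Assignment.updTr (Γ : Assignment α) (π : ℕ) (t : Trace α) : Assignment α :=
  { Γ with tr := Function.update Γ.tr π t }

/-- Update the value of a second-order variable. -/
def Assignment.updSo (Γ : Assignment α) (X : SVar) (T : Set (Trace α)) : Assignment α :=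
  { Γ with so := Function.update Γ.so X T }

/-! ### Hyper²LTL -/

/-- Hyper²LTL formulas: a prefix of (unrestricted) second-order quantifiers and
trace quantifiers (ranging over a second-order variable), followed by a
quantifier-free formula. Second-order quantifiers bind named variables. -/
inductive Formula (α : Type) where
  | qf : QF α → Formula α
  | existsSet : ℕ → Formula α → Formula α
  | forallSet : ℕ → Formula α → Formula α
  | existsTrace : ℕ → SVar → Formula α → Formula α
  | forallTrace : ℕ → SVar → Formula α → Formula α

/-- Standard semantics of Hyper²LTL: second-order quantifiers range over
arbitrary sets of traces. -/
def Formula.sat : Formula α → Assignment α → Prop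
  | .qf ψ, Γ => ψ.sat Γ.tr 0
  | .existsSet X φ, Γ => ∃ T : Set (Trace α), Formula.sat φ (Γ.updSo (SVar.var X) T)
  | .forallSet X φ, Γ => ∀ T : Set (Trace α), Formula.sat φ (Γ.updSo (SVar.var X) T)
  | .existsTrace π X φ, Γ => ∃ t ∈ Γ.so X, Formula.sat φ (Γ.updTr π t)
  | .forallTrace π X φ, Γ => ∀ t ∈ Γ.so X, Formula.sat φ (Γ.updTr π t)

/-- Closed-world semantics of Hyper²LTL: second-order quantifiers range only over
subsets of the universe of discourse `X_d`. -/
def Formula.satCW : Formula α → Assignment α → Prop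
  | .qf ψ, Γ => ψ.sat Γ.tr 0
  | .existsSet X φ, Γ =>
      ∃ T : Set (Trace α), T ⊆ Γ.so SVar.dis ∧ Formula.satCW φ (Γ.updSo (SVar.var X) T)
  | .forallSet X φ, Γ =>
      ∀ T : Set (Trace α), T ⊆ Γ.so SVar.dis → Formula.satCW φ (Γ.updSo (SVar.var X) T)
  | .existsTrace π X φ, Γ => ∃ t ∈ Γ.so X, Formula.satCW φ (Γ.updTr π t)
  | .forallTrace π X φ, Γ => ∀ t ∈ Γ.so X, Formula.satCW φ (Γ.updTr π t)

/-- Free trace variables of a Hyper²LTL formula. -/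
def Formula.freeTraceVars : Formula α → Set ℕ
  | .qf ψ => ψ.traceVars
  | .existsSet _ φ => φ.freeTraceVars
  | .forallSet _ φ => φ.freeTraceVars
  | .existsTrace π _ φ => φ.freeTraceVars \ {π}
  | .forallTrace π _ φ => φ.freeTraceVars \ {π}

/-- Free second-order variables of a Hyper²LTL formula. -/
def Formula.freeSetVars : Formula α → Set SVar
  | .qf _ => ∅
  | .existsSet X φ => φ.freeSetVars \ {SVar.var X}
  | .forallSet X φ => φ.freeSetVars \ {SVar.var X}
  | .existsTrace _ X φ => insert X φ.freeSetVars
  | .forallTrace _ X φ => insert X φ.freeSetVars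

/-- A sentence is a formula in which only `Xₐ` and `X_d` may occur free. -/
def Formula.IsSentence (φ : Formula α) : Prop :=
  φ.freeTraceVars = ∅ ∧ φ.freeSetVars ⊆ {SVar.all, SVar.dis}

/-- A formula is `Xₐ`-free if the distinguished variable `Xₐ` is not used. -/
def Formula.XaFree : Formula α → Prop
  | .qf _ => True
  | .existsSet _ φ => φ.XaFree
  | .forallSet _ φ => φ.XaFree
  | .existsTrace _ X φ => X ≠ SVar.all ∧ φ.XaFree
  | .forallTrace _ X φ => X ≠ SVar.all ∧ φ.XaFree

/-- A numerical code for Hyper²LTL formulas over `AP = ℕ`. -/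
def Formula.code : Formula ℕ → ℕ
  | .qf ψ => Nat.pair 0 ψ.code
  | .existsSet X φ => Nat.pair 1 (Nat.pair X φ.code)
  | .forallSet X φ => Nat.pair 2 (Nat.pair X φ.code)
  | .existsTrace π X φ => Nat.pair 3 (Nat.pair π (Nat.pair X.code φ.code))
  | .forallTrace π X φ => Nat.pair 4 (Nat.pair π (Nat.pair X.code φ.code))

/-- The initial assignment for evaluating sentences (standard semantics):
`Xₐ` is the set of all traces, `X_d` is the model `T`. -/
def initAssign (T : Set (Trace α)) : Assignment α :=
  ⟨fun _ => fun _ => ∅, fun X =>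
    match X with
    | SVar.all => Set.univ
    | SVar.dis => T
    | SVar.var _ => ∅⟩

/-- The initial assignment for evaluating `Xₐ`-free sentences under
closed-world semantics: `X_d` is the model `T`. -/
def initAssignCW (T : Set (Trace α)) : Assignment α :=
  ⟨fun _ => fun _ => ∅, fun X =>
    match X with
    | SVar.dis => T
    | _ => ∅⟩

/-- `T ⊨ φ`: the set of traces `T` is a model of `φ` (standard semantics). -/
def Models (T : Set (Trace α)) (φ : Formula α) : Prop := φ.sat (initAssign T)

/-- `T ⊨_cw φ`: the set of traces `T` satisfies `φ` under closed-world semantics. -/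
def ModelsCW (T : Set (Trace α)) (φ : Formula α) : Prop := φ.satCW (initAssignCW T)

/-! ### Finite transition systems -/

/-- A finite transition system over `AP = ℕ`: vertices are `0, …, V-1`,
with an edge list, initial vertices, and a labeling of vertices by (finite)
sets of atomic propositions. -/
structure TS where
  V : ℕ
  E : List (ℕ × ℕ)
  I : List ℕ
  label : List (List ℕ)

/-- Well-formedness of a transition system: edges and initial vertices are in range,
every vertex has an outgoing edge, and every vertex has a label. -/
def TS.WF (𝔗 : TS) : Prop :=
  (∀ e ∈ 𝔗.E, e.1 < 𝔗.V ∧ e.2 < 𝔗.V) ∧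
  (∀ v, v < 𝔗.V → ∃ w, (v, w) ∈ 𝔗.E) ∧
  (∀ v ∈ 𝔗.I, v < 𝔗.V) ∧
  𝔗.label.length = 𝔗.V

/-- The label of a vertex, as a set of atomic propositions. -/
def TS.labelSet (𝔗 : TS) (v : ℕ) : Set ℕ := {a | a ∈ 𝔗.label.getD v []}

/-- Paths through a transition system, starting in an initial vertex. -/
def TS.IsPath (𝔗 : TS) (ρ : ℕ → ℕ) : Prop :=
  ρ 0 ∈ 𝔗.I ∧ ∀ n, (ρ n, ρ (n + 1)) ∈ 𝔗.E

/-- The set of traces of a transition system. -/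
def TS.traces (𝔗 : TS) : Set (Trace ℕ) :=
  {t | ∃ ρ : ℕ → ℕ, 𝔗.IsPath ρ ∧ t = fun n => 𝔗.labelSet (ρ n)}

/-- A numerical code for transition systems. -/
def TS.code (𝔗 : TS) : ℕ :=
  Nat.pair 𝔗.V (Nat.pair (Encodable.encode 𝔗.E)
    (Nat.pair (Encodable.encode 𝔗.I) (Encodable.encode 𝔗.label)))

/-! ### Arithmetic of orders one, two and three -/

/-- First-order terms over the signature `(+, ·)`. -/
inductive Term3 where
  | var : ℕ → Term3
  | plus : Term3 → Term3 → Term3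
  | times : Term3 → Term3 → Term3

def Term3.val (v : ℕ → ℕ) : Term3 → ℕ
  | .var x => v x
  | .plus t u => t.val v + u.val v
  | .times t u => t.val v * u.val v

def Term3.vars : Term3 → Set ℕ
  | .var x => {x}
  | .plus t u => t.vars ∪ u.vars
  | .times t u => t.vars ∪ u.vars

def Term3.code : Term3 → ℕ
  | .var x => Nat.pair 0 x
  | .plus t u => Nat.pair 1 (Nat.pair t.code u.code)
  | .times t u => Nat.pair 2 (Nat.pair t.code u.code)

/-- Formulas of third-order arithmetic over the signature `(+, ·, <, ∈)`, with
quantification over natural numbers (type 0), sets of natural numbers (type 1),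
and sets of sets of natural numbers (type 2). -/
inductive Form3 where
  | lt : Term3 → Term3 → Form3
  | mem1 : Term3 → ℕ → Form3
  | mem2 : ℕ → ℕ → Form3
  | not : Form3 → Form3
  | or : Form3 → Form3 → Form3
  | ex0 : ℕ → Form3 → Form3
  | all0 : ℕ → Form3 → Form3
  | ex1 : ℕ → Form3 → Form3
  | all1 : ℕ → Form3 → Form3
  | ex2 : ℕ → Form3 → Form3
  | all2 : ℕ → Form3 → Form3

/-- Satisfaction of third-order arithmetic over the standard structure `(ℕ, +, ·, <, ∈)`,
w.r.t. valuations of first-, second- and third-order variables. -/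
def Form3.Sat : (ℕ → ℕ) → (ℕ → Set ℕ) → (ℕ → Set (Set ℕ)) → Form3 → Prop
  | v0, _, _, .lt t u => t.val v0 < u.val v0
  | v0, v1, _, .mem1 t X => t.val v0 ∈ v1 X
  | _, v1, v2, .mem2 X Y => v1 X ∈ v2 Y
  | v0, v1, v2, .not φ => ¬ Form3.Sat v0 v1 v2 φ
  | v0, v1, v2, .or φ ψ => Form3.Sat v0 v1 v2 φ ∨ Form3.Sat v0 v1 v2 ψ
  | v0, v1, v2, .ex0 x φ => ∃ n : ℕ, Form3.Sat (Function.update v0 x n) v1 v2 φ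
  | v0, v1, v2, .all0 x φ => ∀ n : ℕ, Form3.Sat (Function.update v0 x n) v1 v2 φ
  | v0, v1, v2, .ex1 X φ => ∃ S : Set ℕ, Form3.Sat v0 (Function.update v1 X S) v2 φ
  | v0, v1, v2, .all1 X φ => ∀ S : Set ℕ, Form3.Sat v0 (Function.update v1 X S) v2 φ
  | v0, v1, v2, .ex2 X φ => ∃ S : Set (Set ℕ), Form3.Sat v0 v1 (Function.update v2 X S) φ
  | v0, v1, v2, .all2 X φ => ∀ S : Set (Set ℕ), Form3.Sat v0 v1 (Function.update v2 X S) φ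

def Form3.free0 : Form3 → Set ℕ
  | .lt t u => t.vars ∪ u.vars
  | .mem1 t _ => t.vars
  | .mem2 _ _ => ∅
  | .not φ => φ.free0
  | .or φ ψ => φ.free0 ∪ ψ.free0
  | .ex0 x φ => φ.free0 \ {x}
  | .all0 x φ => φ.free0 \ {x}
  | .ex1 _ φ => φ.free0
  | .all1 _ φ => φ.free0
  | .ex2 _ φ => φ.free0
  | .all2 _ φ => φ.free0

def Form3.free1 : Form3 → Set ℕ
  | .lt _ _ => ∅
  | .mem1 _ X => {X}
  | .mem2 X _ => {X}
  | .not φ => φ.free1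
  | .or φ ψ => φ.free1 ∪ ψ.free1
  | .ex0 _ φ => φ.free1
  | .all0 _ φ => φ.free1
  | .ex1 X φ => φ.free1 \ {X}
  | .all1 X φ => φ.free1 \ {X}
  | .ex2 _ φ => φ.free1
  | .all2 _ φ => φ.free1

def Form3.free2 : Form3 → Set ℕ
  | .lt _ _ => ∅
  | .mem1 _ _ => ∅
  | .mem2 _ Y => {Y}
  | .not φ => φ.free2
  | .or φ ψ => φ.free2 ∪ ψ.free2
  | .ex0 _ φ => φ.free2
  | .all0 _ φ => φ.free2
  | .ex1 _ φ => φ.free2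
  | .all1 _ φ => φ.free2
  | .ex2 X φ => φ.free2 \ {X}
  | .all2 X φ => φ.free2 \ {X}

/-- Sentences of (third-order) arithmetic: no free variables of any order. -/
def Form3.IsSentence (φ : Form3) : Prop :=
  φ.free0 = ∅ ∧ φ.free1 = ∅ ∧ φ.free2 = ∅

/-- Truth of a formula of arithmetic in `(ℕ, +, ·, <, ∈)` (under default valuations;
for sentences the valuations are irrelevant). -/
def Form3.Holds (φ : Form3) : Prop :=
  φ.Sat (fun _ => 0) (fun _ => ∅) (fun _ => ∅)

/-- Formulas of second-order arithmetic: no third-order variables or quantifiers. -/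
def Form3.SecondOrder : Form3 → Prop
  | .lt _ _ => True
  | .mem1 _ _ => True
  | .mem2 _ _ => False
  | .not φ => φ.SecondOrder
  | .or φ ψ => φ.SecondOrder ∧ ψ.SecondOrder
  | .ex0 _ φ => φ.SecondOrder
  | .all0 _ φ => φ.SecondOrder
  | .ex1 _ φ => φ.SecondOrder
  | .all1 _ φ => φ.SecondOrder
  | .ex2 _ _ => False
  | .all2 _ _ => False

/-- First-order formulas: arbitrary quantification over numbers, no set quantifiers
(free second-order variables are allowed). -/
def Form3.FirstOrderMatrix : Form3 → Prop
  | .lt _ _ => True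
  | .mem1 _ _ => True
  | .mem2 _ _ => False
  | .not φ => φ.FirstOrderMatrix
  | .or φ ψ => φ.FirstOrderMatrix ∧ ψ.FirstOrderMatrix
  | .ex0 _ φ => φ.FirstOrderMatrix
  | .all0 _ φ => φ.FirstOrderMatrix
  | .ex1 _ _ => False
  | .all1 _ _ => False
  | .ex2 _ _ => False
  | .all2 _ _ => False

/-- Formulas with arbitrary quantification over type-0 and type-1 objects but no
third-order quantifiers (free third-order variables are allowed). -/
def Form3.NoThirdQuant : Form3 → Prop
  | .lt _ _ => True
  | .mem1 _ _ => True
  | .mem2 _ _ => True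
  | .not φ => φ.NoThirdQuant
  | .or φ ψ => φ.NoThirdQuant ∧ ψ.NoThirdQuant
  | .ex0 _ φ => φ.NoThirdQuant
  | .all0 _ φ => φ.NoThirdQuant
  | .ex1 _ φ => φ.NoThirdQuant
  | .all1 _ φ => φ.NoThirdQuant
  | .ex2 _ _ => False
  | .all2 _ _ => False

/-- Σ¹₁-formulas: a block of existential second-order quantifiers followed by a
first-order matrix. -/
inductive Form3.IsSigma11 : Form3 → Prop
  | base (φ : Form3) : φ.FirstOrderMatrix → Form3.IsSigma11 φ
  | step (X : ℕ) (φ : Form3) : Form3.IsSigma11 φ → Form3.IsSigma11 (Form3.ex1 X φ)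

/-- Σ²₁-formulas: a block of existential third-order quantifiers followed by a matrix
with arbitrary type-0 and type-1 quantification. -/
inductive Form3.IsSigma21 : Form3 → Prop
  | base (φ : Form3) : φ.NoThirdQuant → Form3.IsSigma21 φ
  | step (X : ℕ) (φ : Form3) : Form3.IsSigma21 φ → Form3.IsSigma21 (Form3.ex2 X φ)

/-- The class Σ¹₁ of sets of natural numbers. -/
def InSigma11 (A : Set ℕ) : Prop :=
  ∃ φ : Form3, φ.IsSigma11 ∧ φ.free0 ⊆ {0} ∧ φ.free1 = ∅ ∧ φ.free2 = ∅ ∧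
    ∀ n : ℕ, n ∈ A ↔ φ.Sat (Function.update (fun _ => 0) 0 n) (fun _ => ∅) (fun _ => ∅)

/-- The class Σ²₁ of sets of natural numbers. -/
def InSigma21 (A : Set ℕ) : Prop :=
  ∃ φ : Form3, φ.IsSigma21 ∧ φ.free0 ⊆ {0} ∧ φ.free1 = ∅ ∧ φ.free2 = ∅ ∧
    ∀ n : ℕ, n ∈ A ↔ φ.Sat (Function.update (fun _ => 0) 0 n) (fun _ => ∅) (fun _ => ∅)

def Form3.code : Form3 → ℕ
  | .lt t u => Nat.pair 0 (Nat.pair t.code u.code)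
  | .mem1 t X => Nat.pair 1 (Nat.pair t.code X)
  | .mem2 X Y => Nat.pair 2 (Nat.pair X Y)
  | .not φ => Nat.pair 3 φ.code
  | .or φ ψ => Nat.pair 4 (Nat.pair φ.code ψ.code)
  | .ex0 x φ => Nat.pair 5 (Nat.pair x φ.code)
  | .all0 x φ => Nat.pair 6 (Nat.pair x φ.code)
  | .ex1 X φ => Nat.pair 7 (Nat.pair X φ.code)
  | .all1 X φ => Nat.pair 8 (Nat.pair X φ.code)
  | .ex2 X φ => Nat.pair 9 (Nat.pair X φ.code)
  | .all2 X φ => Nat.pair 10 (Nat.pair X φ.code)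

/-- The decision problem "truth in third-order arithmetic". -/
def ThirdOrderTruth : Set Form3 := {φ | φ.IsSentence ∧ φ.Holds}

/-- The decision problem "truth in second-order arithmetic". -/
def SecondOrderTruth : Set Form3 := {φ | φ.SecondOrder ∧ φ.IsSentence ∧ φ.Holds}

/-! ### Polynomial-time reductions -/

/-- A function on natural numbers is polynomial-time computable if it is computable
in polynomial time by a two-stack Turing machine w.r.t. the standard binary encoding. -/
def PolyTimeComputable (f : ℕ → ℕ) : Prop :=
  Nonempty (Turing.TM2ComputableInPolyTime Computability.encodingNatBool.encode
    Computability.encodingNatBool.encode f)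

/-- `A` many-one reduces to `B` in polynomial time (problem instances are coded
into `ℕ` via `cα`, `cβ`): there is a map `g` on instances, implemented by a
polynomial-time computable function on codes, such that `x ∈ A ↔ g x ∈ B`. -/
def PolyTimeReducible {σ τ : Type} (cα : σ → ℕ) (cβ : τ → ℕ) (A : Set σ) (B : Set τ) : Prop :=
  ∃ (g : σ → τ) (f : ℕ → ℕ), PolyTimeComputable f ∧
    (∀ x, f (cα x) = cβ (g x)) ∧ ∀ x, x ∈ A ↔ g x ∈ B

/-- Two decision problems are polynomial-time equivalent if each reduces to the
other in polynomial time. -/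
def PolyTimeEquivalent {σ τ : Type} (cα : σ → ℕ) (cβ : τ → ℕ) (A : Set σ) (B : Set τ) : Prop :=
  PolyTimeReducible cα cβ A B ∧ PolyTimeReducible cβ cα B A

/-! ### Hyper²LTL decision problems -/

def H2SAT : Set (Formula ℕ) := {φ | φ.IsSentence ∧ ∃ T : Set (Trace ℕ), Models T φ}

def H2SATcw : Set (Formula ℕ) :=
  {φ | φ.IsSentence ∧ φ.XaFree ∧ ∃ T : Set (Trace ℕ), ModelsCW T φ}

def H2FinSAT : Set (Formula ℕ) := {φ | φ.IsSentence ∧ ∃ 𝔗 : TS, 𝔗.WF ∧ Models 𝔗.traces φ}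

def H2FinSATcw : Set (Formula ℕ) :=
  {φ | φ.IsSentence ∧ φ.XaFree ∧ ∃ 𝔗 : TS, 𝔗.WF ∧ ModelsCW 𝔗.traces φ}

def H2MC : Set (TS × Formula ℕ) := {p | p.1.WF ∧ p.2.IsSentence ∧ Models p.1.traces p.2}

def H2MCcw : Set (TS × Formula ℕ) :=
  {p | p.1.WF ∧ p.2.IsSentence ∧ p.2.XaFree ∧ ModelsCW p.1.traces p.2}

/-- Coding of model-checking instances. -/
def mcCode (p : TS × Formula ℕ) : ℕ := Nat.pair p.1.code p.2.code

/-! ### Hyper²LTL_mm : minimality/maximality-guarded second-order quantifiers -/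

inductive MinMax where
  | min : MinMax
  | max : MinMax
deriving DecidableEq

def MinMax.code : MinMax → ℕ
  | .min => 0
  | .max => 1

/-- Hyper²LTL_mm formulas: second-order quantifiers are guarded and range over
minimal (⋎) resp. maximal (⋏) sets satisfying the guard. -/
inductive MMFormula (α : Type) where
  | qf : QF α → MMFormula α
  | existsSetG : ℕ → MinMax → MMFormula α → MMFormula α → MMFormula α
  | forallSetG : ℕ → MinMax → MMFormula α → MMFormula α → MMFormula α
  | existsTrace : ℕ → SVar → MMFormula α → MMFormula α
  | forallTrace : ℕ → SVar → MMFormula α → MMFormula α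

/-- Minimal/maximal solutions of a guard predicate (standard semantics). -/
def IsSol (P : Set (Trace α) → Prop) : MinMax → Set (Trace α) → Prop
  | .min, T => P T ∧ ∀ T', T' ⊂ T → ¬ P T'
  | .max, T => P T ∧ ∀ T', T ⊂ T' → ¬ P T'

/-- Minimal/maximal solutions among subsets of the universe of discourse `D`
(closed-world semantics). -/
def IsSolCW (D : Set (Trace α)) (P : Set (Trace α) → Prop) : MinMax → Set (Trace α) → Prop
  | .min, T => T ⊆ D ∧ P T ∧ ∀ T', T' ⊂ T → ¬ P T'
  | .max, T => T ⊆ D ∧ P T ∧ ∀ T', T ⊂ T' → T' ⊆ D → ¬ P T'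

/-- Standard semantics of Hyper²LTL_mm. -/
def MMFormula.sat : MMFormula α → Assignment α → Prop
  | .qf ψ, Γ => ψ.sat Γ.tr 0
  | .existsSetG X mm g b, Γ =>
      ∃ T, IsSol (fun T' => MMFormula.sat g (Γ.updSo (SVar.var X) T')) mm T ∧
        MMFormula.sat b (Γ.updSo (SVar.var X) T)
  | .forallSetG X mm g b, Γ =>
      ∀ T, IsSol (fun T' => MMFormula.sat g (Γ.updSo (SVar.var X) T')) mm T →
        MMFormula.sat b (Γ.updSo (SVar.var X) T)
  | .existsTrace π X φ, Γ => ∃ t ∈ Γ.so X, MMFormula.sat φ (Γ.updTr π t)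
  | .forallTrace π X φ, Γ => ∀ t ∈ Γ.so X, MMFormula.sat φ (Γ.updTr π t)

/-- Closed-world semantics of Hyper²LTL_mm. -/
def MMFormula.satCW : MMFormula α → Assignment α → Prop
  | .qf ψ, Γ => ψ.sat Γ.tr 0
  | .existsSetG X mm g b, Γ =>
      ∃ T, IsSolCW (Γ.so SVar.dis) (fun T' => MMFormula.satCW g (Γ.updSo (SVar.var X) T')) mm T ∧
        MMFormula.satCW b (Γ.updSo (SVar.var X) T)
  | .forallSetG X mm g b, Γ =>
      ∀ T, IsSolCW (Γ.so SVar.dis) (fun T' => MMFormula.satCW g (Γ.updSo (SVar.var X) T')) mm T →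
        MMFormula.satCW b (Γ.updSo (SVar.var X) T)
  | .existsTrace π X φ, Γ => ∃ t ∈ Γ.so X, MMFormula.satCW φ (Γ.updTr π t)
  | .forallTrace π X φ, Γ => ∀ t ∈ Γ.so X, MMFormula.satCW φ (Γ.updTr π t)

def MMFormula.freeTraceVars : MMFormula α → Set ℕ
  | .qf ψ => ψ.traceVars
  | .existsSetG _ _ g b => g.freeTraceVars ∪ b.freeTraceVars
  | .forallSetG _ _ g b => g.freeTraceVars ∪ b.freeTraceVars
  | .existsTrace π _ φ => φ.freeTraceVars \ {π}
  | .forallTrace π _ φ => φ.freeTraceVars \ {π}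

def MMFormula.freeSetVars : MMFormula α → Set SVar
  | .qf _ => ∅
  | .existsSetG X _ g b => (g.freeSetVars ∪ b.freeSetVars) \ {SVar.var X}
  | .forallSetG X _ g b => (g.freeSetVars ∪ b.freeSetVars) \ {SVar.var X}
  | .existsTrace _ X φ => insert X φ.freeSetVars
  | .forallTrace _ X φ => insert X φ.freeSetVars

def MMFormula.IsSentence (φ : MMFormula α) : Prop :=
  φ.freeTraceVars = ∅ ∧ φ.freeSetVars ⊆ {SVar.all, SVar.dis}

def MMFormula.XaFree : MMFormula α → Prop
  | .qf _ => True
  | .existsSetG _ _ g b => g.XaFree ∧ b.XaFree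
  | .forallSetG _ _ g b => g.XaFree ∧ b.XaFree
  | .existsTrace _ X φ => X ≠ SVar.all ∧ φ.XaFree
  | .forallTrace _ X φ => X ≠ SVar.all ∧ φ.XaFree

/-- The fragment Hyper²LTL_mm^⋏: only maximality-guarded second-order quantifiers. -/
def MMFormula.OnlyMax : MMFormula α → Prop
  | .qf _ => True
  | .existsSetG _ mm g b => mm = MinMax.max ∧ g.OnlyMax ∧ b.OnlyMax
  | .forallSetG _ mm g b => mm = MinMax.max ∧ g.OnlyMax ∧ b.OnlyMax
  | .existsTrace _ _ φ => φ.OnlyMax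
  | .forallTrace _ _ φ => φ.OnlyMax

/-- The fragment Hyper²LTL_mm^⋎: only minimality-guarded second-order quantifiers. -/
def MMFormula.OnlyMin : MMFormula α → Prop
  | .qf _ => True
  | .existsSetG _ mm g b => mm = MinMax.min ∧ g.OnlyMin ∧ b.OnlyMin
  | .forallSetG _ mm g b => mm = MinMax.min ∧ g.OnlyMin ∧ b.OnlyMin
  | .existsTrace _ _ φ => φ.OnlyMin
  | .forallTrace _ _ φ => φ.OnlyMin

def MMFormula.atoms : MMFormula α → Set α
  | .qf ψ => ψ.atoms
  | .existsSetG _ _ g b => g.atoms ∪ b.atoms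
  | .forallSetG _ _ g b => g.atoms ∪ b.atoms
  | .existsTrace _ _ φ => φ.atoms
  | .forallTrace _ _ φ => φ.atoms

def MMFormula.code : MMFormula ℕ → ℕ
  | .qf ψ => Nat.pair 0 ψ.code
  | .existsSetG X mm g b => Nat.pair 1 (Nat.pair X (Nat.pair mm.code (Nat.pair g.code b.code)))
  | .forallSetG X mm g b => Nat.pair 2 (Nat.pair X (Nat.pair mm.code (Nat.pair g.code b.code)))
  | .existsTrace π X φ => Nat.pair 3 (Nat.pair π (Nat.pair X.code φ.code))
  | .forallTrace π X φ => Nat.pair 4 (Nat.pair π (Nat.pair X.code φ.code))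

def MMModels (T : Set (Trace α)) (φ : MMFormula α) : Prop := φ.sat (initAssign T)

def MMModelsCW (T : Set (Trace α)) (φ : MMFormula α) : Prop := φ.satCW (initAssignCW T)

/-! ### lfp-Hyper²LTL_mm : quantification over least fixed points -/

/-- A guard `φ^con = π̇₁ ▷ Y ∧ ⋯ ∧ π̇ₙ ▷ Y ∧ ∀π̈₁ ∈ Z₁.⋯∀π̈_{n'} ∈ Z_{n'}. (ψ^step → π̈_m ▷ Y)`
for a least-fixed-point second-order quantifier. -/
structure LfpGuard (α : Type) where
  nSeeds : ℕ
  seed : Fin nSeeds → ℕ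
  nUniv : ℕ
  univVar : Fin nUniv → ℕ
  univRange : Fin nUniv → SVar
  target : Fin nUniv
  step : QF α

/-- The monotone operator on sets of traces induced by a guard (for the
second-order variable `Y`, w.r.t. the assignment `Γ`). -/
def LfpGuard.op (g : LfpGuard α) (Y : ℕ) (Γ : Assignment α) (S : Set (Trace α)) :
    Set (Trace α) :=
  S ∪ {t | ∃ i : Fin g.nSeeds, t = Γ.tr (g.seed i)} ∪
    {t | ∃ ts : Fin g.nUniv → Trace α,
      (∀ i, ts i ∈ (if g.univRange i = SVar.var Y then S else Γ.so (g.univRange i))) ∧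
      g.step.sat
        ((List.ofFn fun i => (g.univVar i, ts i)).foldr
          (fun p w => Function.update w p.1 p.2) Γ.tr) 0 ∧
      t = ts g.target}

/-- The least fixed point of the operator induced by a guard. -/
def LfpGuard.lfp (g : LfpGuard α) (Y : ℕ) (Γ : Assignment α) : Set (Trace α) :=
  ⋃ n : ℕ, (g.op Y Γ)^[n] ∅

/-- The trace variables occurring free in a guard. -/
def LfpGuard.freeTraceVars (g : LfpGuard α) : Set ℕ :=
  {π | ∃ i, g.seed i = π} ∪ (g.step.traceVars \ {π | ∃ i, g.univVar i = π})

def LfpGuard.code (g : LfpGuard ℕ) : ℕ :=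
  Nat.pair (Encodable.encode (List.ofFn g.seed))
    (Nat.pair (Encodable.encode (List.ofFn g.univVar))
      (Nat.pair (Encodable.encode (List.ofFn fun i => SVar.code (g.univRange i)))
        (Nat.pair g.target.val g.step.code)))

/-- lfp-Hyper²LTL_mm formulas: blocks of trace quantifiers and least-fixed-point
second-order quantifiers, followed by a quantifier-free formula. (Since every guard has
a unique minimal solution, existential and universal second-order quantification
coincide and are represented by the single constructor `fix`.) -/
inductive LfpFormula (α : Type) where
  | qf : QF α → LfpFormula α
  | existsTrace : ℕ → SVar → LfpFormula α → LfpFormula α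
  | forallTrace : ℕ → SVar → LfpFormula α → LfpFormula α
  | fix : ℕ → LfpGuard α → LfpFormula α → LfpFormula α

def LfpFormula.sat : LfpFormula α → Assignment α → Prop
  | .qf ψ, Γ => ψ.sat Γ.tr 0
  | .existsTrace π X φ, Γ => ∃ t ∈ Γ.so X, LfpFormula.sat φ (Γ.updTr π t)
  | .forallTrace π X φ, Γ => ∀ t ∈ Γ.so X, LfpFormula.sat φ (Γ.updTr π t)
  | .fix Y g φ, Γ => LfpFormula.sat φ (Γ.updSo (SVar.var Y) (g.lfp Y Γ))

/-- Scoping: trace quantifiers and guards only refer to second-order variables that are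
in scope (`Xₐ`, `X_d`, and the previously introduced fixed-point variables). -/
def LfpFormula.ScopeOK : LfpFormula α → Set SVar → Prop
  | .qf _, _ => True
  | .existsTrace _ X φ, A => X ∈ A ∧ LfpFormula.ScopeOK φ A
  | .forallTrace _ X φ, A => X ∈ A ∧ LfpFormula.ScopeOK φ A
  | .fix Y g φ, A => (∀ i, g.univRange i ∈ insert (SVar.var Y) A) ∧
      LfpFormula.ScopeOK φ (insert (SVar.var Y) A)

def LfpFormula.freeTraceVars : LfpFormula α → Set ℕ
  | .qf ψ => ψ.traceVars
  | .existsTrace π _ φ => φ.freeTraceVars \ {π}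
  | .forallTrace π _ φ => φ.freeTraceVars \ {π}
  | .fix _ g φ => g.freeTraceVars ∪ φ.freeTraceVars

def LfpFormula.IsSentence (φ : LfpFormula α) : Prop :=
  φ.freeTraceVars = ∅ ∧ φ.ScopeOK {SVar.all, SVar.dis}

def LfpFormula.XaFree : LfpFormula α → Prop
  | .qf _ => True
  | .existsTrace _ X φ => X ≠ SVar.all ∧ φ.XaFree
  | .forallTrace _ X φ => X ≠ SVar.all ∧ φ.XaFree
  | .fix _ g φ => (∀ i, g.univRange i ≠ SVar.all) ∧ φ.XaFree

def LfpFormula.code : LfpFormula ℕ → ℕ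
  | .qf ψ => Nat.pair 0 ψ.code
  | .existsTrace π X φ => Nat.pair 1 (Nat.pair π (Nat.pair X.code φ.code))
  | .forallTrace π X φ => Nat.pair 2 (Nat.pair π (Nat.pair X.code φ.code))
  | .fix Y g φ => Nat.pair 3 (Nat.pair Y (Nat.pair g.code φ.code))

def LfpModels (T : Set (Trace α)) (φ : LfpFormula α) : Prop := φ.sat (initAssign T)


/-! ### Auxiliary development for Statement 15 (downward Löwenheim–Skolem) -/

section CountableModel

/-- The default (empty) trace. -/
def etr : Trace α := fun _ => ∅

/-- Lists with members in a countable set form a countable set. -/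
lemma countable_setOf_lists {β : Type} {s : Set β} (hs : s.Countable) :
    {l : List β | ∀ x ∈ l, x ∈ s}.Countable := by
  have : Countable s := hs.to_subtype
  refine (Set.countable_range (fun l : List s => l.map Subtype.val)).mono ?_
  intro l hl
  refine ⟨l.attach.map (fun x => ⟨x.1, hl _ x.2⟩), ?_⟩
  simp [List.map_map, Function.comp_def]

/-- Iterative construction of a Skolem hull. -/
def hullSeq {β ι : Type} (F : ι → List β → Set β) (base : Set β) : ℕ → Set β
  | 0 => base
  | n + 1 => hullSeq F base n ∪
      ⋃ i, ⋃ l ∈ {l : List β | ∀ x ∈ l, x ∈ hullSeq F base n}, F i l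

lemma hullSeq_mono {β ι : Type} (F : ι → List β → Set β) (base : Set β) {m n : ℕ}
    (h : m ≤ n) : hullSeq F base m ⊆ hullSeq F base n := by
  induction n with
  | zero => rw [Nat.le_zero.mp h]
  | succ n ih =>
    rcases Nat.lt_or_ge m (n + 1) with h' | h'
    · exact (ih (Nat.lt_succ_iff.mp h')).trans Set.subset_union_left
    · rw [le_antisymm h h']

/-- Existence of a countable Skolem hull closed under countably many
countable-valued witness functions. -/
lemma exists_hull {β ι : Type} [Countable ι] (F : ι → List β → Set β)
    (hF : ∀ i l, (F i l).Countable) (base : Set β) (hb : base.Countable) :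
    ∃ hull : Set β, base ⊆ hull ∧ hull.Countable ∧
      ∀ i l, (∀ x ∈ l, x ∈ hull) → F i l ⊆ hull := by
  have hc : ∀ n, (hullSeq F base n).Countable := by
    intro n
    induction n with
    | zero => exact hb
    | succ n ih =>
      exact ih.union (Set.countable_iUnion fun i =>
        Set.Countable.biUnion (countable_setOf_lists ih) fun l _ => hF i l)
  refine ⟨⋃ n, hullSeq F base n, Set.subset_iUnion (hullSeq F base) 0, Set.countable_iUnion hc, ?_⟩
  intro i l hl
  have hN : ∃ N, ∀ x ∈ l, x ∈ hullSeq F base N := by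
    clear hF
    induction l with
    | nil => exact ⟨0, by simp⟩
    | cons a l ih =>
      obtain ⟨N1, hN1⟩ := ih (fun x hx => hl x (List.mem_cons_of_mem _ hx))
      obtain ⟨n, hn⟩ := Set.mem_iUnion.mp (hl a (List.mem_cons_self))
      refine ⟨max n N1, fun x hx => ?_⟩
      rcases List.mem_cons.mp hx with rfl | hx
      · exact hullSeq_mono F base (le_max_left _ _) hn
      · exact hullSeq_mono F base (le_max_right _ _) (hN1 x hx)
  obtain ⟨N, hN⟩ := hN
  intro x hx
  exact Set.mem_iUnion.mpr ⟨N + 1, Or.inr (Set.mem_iUnion.mpr ⟨i,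
    Set.mem_iUnion₂.mpr ⟨l, hN, hx⟩⟩)⟩

end CountableModel


section Countability

instance : Countable SVar := by
  refine (countable_iff_exists_injective SVar).mpr ⟨SVar.code, ?_⟩
  intro x y h
  cases x <;> cases y <;> simp_all [SVar.code]

/-- A numeric code for quantifier-free formulas, relative to an injection of `AP` into `ℕ`. -/
def QF.ncode (f : α → ℕ) : QF α → ℕ
  | .atom a π => Nat.pair 0 (Nat.pair (f a) π)
  | .not ψ => Nat.pair 1 (QF.ncode f ψ)
  | .or ψ₁ ψ₂ => Nat.pair 2 (Nat.pair (QF.ncode f ψ₁) (QF.ncode f ψ₂))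
  | .next ψ => Nat.pair 3 (QF.ncode f ψ)
  | .untl ψ₁ ψ₂ => Nat.pair 4 (Nat.pair (QF.ncode f ψ₁) (QF.ncode f ψ₂))

lemma QF.ncode_inj {f : α → ℕ} (hf : Function.Injective f) :
    Function.Injective (QF.ncode f) := by
  intro x y h
  induction x generalizing y <;> cases y <;>
      simp only [QF.ncode, Nat.pair_eq_pair] at h <;>
      try exact absurd h.1 (by decide)
  case atom.atom =>
    obtain ⟨-, h1, h2⟩ := h
    rw [hf h1, h2]
  case not.not ih _ =>
    rw [ih h.2]
  case or.or ih1 ih2 _ _ =>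
    rw [ih1 h.2.1, ih2 h.2.2]
  case next.next ih _ =>
    rw [ih h.2]
  case untl.untl ih1 ih2 _ _ =>
    rw [ih1 h.2.1, ih2 h.2.2]

instance [Countable α] : Countable (QF α) := by
  obtain ⟨f, hf⟩ := (countable_iff_exists_injective α).mp inferInstance
  exact (countable_iff_exists_injective _).mpr ⟨_, QF.ncode_inj hf⟩

/-- An injective packaging of guards into a countable type. -/
def LfpGuard.pack (g : LfpGuard α) : List ℕ × List ℕ × List SVar × ℕ × QF α :=
  (List.ofFn g.seed, List.ofFn g.univVar, List.ofFn g.univRange, g.target.val, g.step)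

lemma LfpGuard.pack_inj : Function.Injective (LfpGuard.pack (α := α)) := by
  rintro ⟨n1, s1, m1, v1, r1, t1, st1⟩ ⟨n2, s2, m2, v2, r2, t2, st2⟩ h
  simp only [LfpGuard.pack, Prod.mk.injEq] at h
  obtain ⟨h1, h2, h3, h4, h5⟩ := h
  have hn : n1 = n2 := by simpa using congrArg List.length h1
  subst hn
  have hm : m1 = m2 := by simpa using congrArg List.length h2
  subst hm
  obtain rfl := List.ofFn_injective h1
  obtain rfl := List.ofFn_injective h2
  obtain rfl := List.ofFn_injective h3
  obtain rfl : t1 = t2 := Fin.ext h4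
  obtain rfl := h5
  rfl

instance [Countable α] : Countable (LfpGuard α) := LfpGuard.pack_inj.countable

/-- An injective packaging of lfp-formulas into a countable type. -/
def LfpFormula.pack : LfpFormula α →
    List ((ℕ × SVar) ⊕ (ℕ × SVar) ⊕ (ℕ × LfpGuard α)) × QF α
  | .qf ψ => ([], ψ)
  | .existsTrace π X φ => (Sum.inl (π, X) :: φ.pack.1, φ.pack.2)
  | .forallTrace π X φ => (Sum.inr (Sum.inl (π, X)) :: φ.pack.1, φ.pack.2)
  | .fix Y g φ => (Sum.inr (Sum.inr (Y, g)) :: φ.pack.1, φ.pack.2)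

lemma LfpFormula.pack_inj : Function.Injective (LfpFormula.pack (α := α)) := by
  intro x y h
  induction x generalizing y <;> cases y <;>
      simp only [LfpFormula.pack, Prod.mk.injEq, List.cons.injEq, Sum.inl.injEq, Sum.inr.injEq,
        List.cons_ne_nil, List.nil_eq, false_and, and_false, reduceCtorEq] at h
  case qf.qf => rw [h.2]
  case existsTrace.existsTrace π X φ ih π' X' φ' =>
    obtain ⟨⟨⟨rfl, rfl⟩, h1⟩, h2⟩ := h
    rw [ih (Prod.ext h1 h2)]
  case forallTrace.forallTrace π X φ ih π' X' φ' =>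
    obtain ⟨⟨⟨rfl, rfl⟩, h1⟩, h2⟩ := h
    rw [ih (Prod.ext h1 h2)]
  case fix.fix Y g φ ih Y' g' φ' =>
    obtain ⟨⟨⟨rfl, rfl⟩, h1⟩, h2⟩ := h
    rw [ih (Prod.ext h1 h2)]

instance [Countable α] : Countable (LfpFormula α) := LfpFormula.pack_inj.countable

/-- Extension descriptors: how an assignment is built from the initial assignment by
trace updates and lfp set updates. -/
inductive Ext (α : Type) where
  | nil : Ext α
  | tr : ℕ → Ext α → Ext α
  | fx : ℕ → LfpGuard α → Ext α → Ext α

def Ext.pack : Ext α → List (ℕ ⊕ (ℕ × LfpGuard α))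
  | .nil => []
  | .tr π r => Sum.inl π :: r.pack
  | .fx Y g r => Sum.inr (Y, g) :: r.pack

lemma Ext.pack_inj : Function.Injective (Ext.pack (α := α)) := by
  intro x y h
  induction x generalizing y <;> cases y <;>
      simp only [Ext.pack, List.cons.injEq, Sum.inl.injEq, Sum.inr.injEq, Prod.mk.injEq,
        List.cons_ne_nil, List.nil_eq, false_and, reduceCtorEq] at h
  case nil.nil => rfl
  case tr.tr π r ih π' r' =>
    obtain ⟨rfl, h⟩ := h
    rw [ih h]
  case fx.fx Y g r ih Y' g' r' =>
    obtain ⟨⟨rfl, rfl⟩, h⟩ := h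
    rw [ih h]

instance [Countable α] : Countable (Ext α) := Ext.pack_inj.countable

end Countability


section LfpLemmas

lemma LfpGuard.subset_op (g : LfpGuard α) (Y : ℕ) (Γ : Assignment α) (S : Set (Trace α)) :
    S ⊆ g.op Y Γ S :=
  fun _ ht => Set.mem_union_left _ (Set.mem_union_left _ ht)

lemma LfpGuard.mem_op {g : LfpGuard α} {Y : ℕ} {Γ : Assignment α} {S : Set (Trace α)}
    {t : Trace α} :
    t ∈ g.op Y Γ S ↔
      t ∈ S ∨ (∃ i : Fin g.nSeeds, t = Γ.tr (g.seed i)) ∨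
      (∃ ts : Fin g.nUniv → Trace α,
        (∀ i, ts i ∈ (if g.univRange i = SVar.var Y then S else Γ.so (g.univRange i))) ∧
        g.step.sat
          ((List.ofFn fun i => (g.univVar i, ts i)).foldr
            (fun p w => Function.update w p.1 p.2) Γ.tr) 0 ∧
        t = ts g.target) := by
  simp only [LfpGuard.op, Set.mem_union, Set.mem_setOf_eq, or_assoc]

lemma LfpGuard.op_mono (g : LfpGuard α) (Y : ℕ) {Γ₁ Γ₂ : Assignment α}
    {S₁ S₂ : Set (Trace α)} (htr : Γ₁.tr = Γ₂.tr)
    (hso : ∀ i, g.univRange i ≠ SVar.var Y → Γ₁.so (g.univRange i) ⊆ Γ₂.so (g.univRange i))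
    (hS : S₁ ⊆ S₂) : g.op Y Γ₁ S₁ ⊆ g.op Y Γ₂ S₂ := by
  intro t ht
  rw [LfpGuard.mem_op] at ht ⊢
  rcases ht with ht | ht | ⟨ts, h1, h2, h3⟩
  · exact Or.inl (hS ht)
  · exact Or.inr (Or.inl (htr ▸ ht))
  · refine Or.inr (Or.inr ⟨ts, fun i => ?_, htr ▸ h2, h3⟩)
    by_cases hY : g.univRange i = SVar.var Y
    · rw [if_pos hY]
      have := h1 i
      rw [if_pos hY] at this
      exact hS this
    · rw [if_neg hY]
      have := h1 i
      rw [if_neg hY] at this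
      exact hso i hY this

lemma LfpGuard.stage_mono (g : LfpGuard α) (Y : ℕ) (Γ : Assignment α) {m n : ℕ} (h : m ≤ n) :
    (g.op Y Γ)^[m] ∅ ⊆ (g.op Y Γ)^[n] ∅ := by
  induction n, h using Nat.le_induction with
  | base => exact subset_rfl
  | succ n _ ih =>
    rw [Function.iterate_succ_apply']
    exact ih.trans (g.subset_op Y Γ _)

lemma LfpGuard.stage_subset_lfp (g : LfpGuard α) (Y : ℕ) (Γ : Assignment α) (n : ℕ) :
    (g.op Y Γ)^[n] ∅ ⊆ g.lfp Y Γ :=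
  Set.subset_iUnion (fun n => (g.op Y Γ)^[n] ∅) n

lemma LfpGuard.op_lfp (g : LfpGuard α) (Y : ℕ) (Γ : Assignment α) :
    g.op Y Γ (g.lfp Y Γ) ⊆ g.lfp Y Γ := by
  intro t ht
  rw [LfpGuard.mem_op] at ht
  rcases ht with ht | ht | ⟨ts, h1, h2, h3⟩
  · exact ht
  · refine g.stage_subset_lfp Y Γ 1 ?_
    rw [Function.iterate_one, LfpGuard.mem_op]
    exact Or.inr (Or.inl ht)
  · have hN : ∀ i, ∃ n, ts i ∈
        (if g.univRange i = SVar.var Y then (g.op Y Γ)^[n] ∅ else Γ.so (g.univRange i)) := by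
      intro i
      by_cases hY : g.univRange i = SVar.var Y
      · have := h1 i
        rw [if_pos hY] at this
        obtain ⟨S, ⟨n, rfl⟩, hn⟩ := this
        exact ⟨n, by rw [if_pos hY]; exact hn⟩
      · have := h1 i
        rw [if_neg hY] at this
        exact ⟨0, by rw [if_neg hY]; exact this⟩
    choose N hN using hN
    refine g.stage_subset_lfp Y Γ (Finset.univ.sup N + 1) ?_
    rw [Function.iterate_succ_apply', LfpGuard.mem_op]
    refine Or.inr (Or.inr ⟨ts, fun i => ?_, h2, h3⟩)
    by_cases hY : g.univRange i = SVar.var Y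
    · rw [if_pos hY]
      have := hN i
      rw [if_pos hY] at this
      exact g.stage_mono Y Γ (Finset.le_sup (Finset.mem_univ i)) this
    · rw [if_neg hY]
      have := hN i
      rwa [if_neg hY] at this

lemma LfpGuard.lfp_mono (g : LfpGuard α) (Y : ℕ) {Γ₁ Γ₂ : Assignment α}
    (htr : Γ₁.tr = Γ₂.tr)
    (hso : ∀ i, g.univRange i ≠ SVar.var Y → Γ₁.so (g.univRange i) ⊆ Γ₂.so (g.univRange i)) :
    g.lfp Y Γ₁ ⊆ g.lfp Y Γ₂ := by
  refine Set.iUnion_subset fun n => ?_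
  induction n with
  | zero => simp
  | succ n ih =>
    rw [Function.iterate_succ_apply']
    exact (g.op_mono Y htr hso subset_rfl).trans ((g.op_mono Y rfl (fun _ _ => subset_rfl) ih).trans (g.op_lfp Y Γ₂))

end LfpLemmas


section Hull

/-- Apply an extension descriptor, consuming traces from the list `l`. -/
def applyExt (Γ0 : Assignment α) : Ext α → List (Trace α) → Assignment α
  | .nil, _ => Γ0
  | .tr π r, l => (applyExt Γ0 r l.tail).updTr π (l.headD etr)
  | .fx Y g r, l =>
      (applyExt Γ0 r l).updSo (SVar.var Y) (g.lfp Y (applyExt Γ0 r l))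

/-- Extension descriptors with `Xₐ`-free guards. -/
def Ext.OK : Ext α → Prop
  | .nil => True
  | .tr _ r => r.OK
  | .fx _ g r => (∀ i, g.univRange i ≠ SVar.all) ∧ r.OK

/-- The relation between an assignment over the full model and the corresponding
assignment over the restricted model. -/
structure GoodPair (hull : Set (Trace α)) (ΓT ΓR : Assignment α) : Prop where
  tr_eq : ΓR.tr = ΓT.tr
  tr_mem : ∀ π, ΓT.tr π ∈ hull
  so_eq : ∀ X, X ≠ SVar.all → ΓR.so X = ΓT.so X ∩ hull
  so_all : ΓR.so SVar.all ⊆ ΓT.so SVar.all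

/-- Index type for the Skolem-hull requirements. -/
def RIdx (α : Type) : Type :=
  (Ext α × ℕ × SVar × LfpFormula α) ⊕ (Ext α × ℕ × LfpGuard α × ℕ)

instance [Countable α] : Countable (RIdx α) := by
  unfold RIdx; infer_instance

open Classical in
/-- Skolem witness functions: existential witnesses for trace quantifiers, and
derivation witnesses for the stages of least fixed points. -/
noncomputable def wit (T : Set (Trace α)) : RIdx α → List (Trace α) → Set (Trace α)
  | Sum.inl (ext, π, X, ψ), l =>
      if h : ∃ t ∈ (applyExt (initAssign T) ext l).so X,
          ψ.sat ((applyExt (initAssign T) ext l).updTr π t) then {h.choose} else ∅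
  | Sum.inr (ext, Y, g, m), l =>
      if h : ∃ ts : Fin g.nUniv → Trace α,
          (∀ i, ts i ∈ (if g.univRange i = SVar.var Y
            then (g.op Y (applyExt (initAssign T) ext l.tail))^[m] ∅
            else (applyExt (initAssign T) ext l.tail).so (g.univRange i))) ∧
          g.step.sat ((List.ofFn fun i => (g.univVar i, ts i)).foldr
            (fun p w => Function.update w p.1 p.2) (applyExt (initAssign T) ext l.tail).tr) 0 ∧
          l.headD etr = ts g.target
        then Set.range h.choose else ∅

lemma wit_countable (T : Set (Trace α)) (i : RIdx α) (l : List (Trace α)) :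
    (wit T i l).Countable := by
  rcases i with ⟨ext, π, X, ψ⟩ | ⟨ext, Y, g, m⟩ <;> rw [wit] <;> split
  · exact Set.countable_singleton _
  · exact Set.countable_empty
  · exact (Set.finite_range _).countable
  · exact Set.countable_empty

/-- Absoluteness of least fixed points for the Skolem hull. -/
lemma lfp_absolute {T hull : Set (Trace α)}
    (hcl : ∀ i l, (∀ x ∈ l, x ∈ hull) → wit T i l ⊆ hull)
    (ext : Ext α) (l : List (Trace α)) (hl : ∀ x ∈ l, x ∈ hull)
    {ΓR : Assignment α} (hg : GoodPair hull (applyExt (initAssign T) ext l) ΓR)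
    (Y : ℕ) (g : LfpGuard α) (hXa : ∀ i, g.univRange i ≠ SVar.all) :
    g.lfp Y ΓR = g.lfp Y (applyExt (initAssign T) ext l) ∩ hull := by
  set ΓT := applyExt (initAssign T) ext l with hΓT
  have hsub : ∀ i, g.univRange i ≠ SVar.var Y → ΓR.so (g.univRange i) ⊆ ΓT.so (g.univRange i) := by
    intro i _
    rw [hg.so_eq _ (hXa i)]
    exact Set.inter_subset_left
  apply Set.Subset.antisymm
  · -- `lfp` over the restriction is contained in the full `lfp` and in the hull
    refine Set.subset_inter (g.lfp_mono Y hg.tr_eq hsub) ?_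
    refine Set.iUnion_subset fun n => ?_
    induction n with
    | zero => simp
    | succ n ih =>
      rw [Function.iterate_succ_apply']
      intro t ht
      rw [LfpGuard.mem_op] at ht
      rcases ht with ht | ⟨i, rfl⟩ | ⟨ts, h1, _, rfl⟩
      · exact ih ht
      · rw [hg.tr_eq]
        exact hg.tr_mem _
      · have := h1 g.target
        by_cases hY : g.univRange g.target = SVar.var Y
        · rw [if_pos hY] at this
          exact ih this
        · rw [if_neg hY, hg.so_eq _ (hXa g.target)] at this
          exact this.2
  · -- every element of the full `lfp` lying in the hull is in the restricted `lfp`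
    rintro t ⟨htT, thull⟩
    obtain ⟨S, ⟨n, rfl⟩, hn⟩ := htT
    induction n generalizing t with
    | zero => exact absurd hn (Set.notMem_empty t)
    | succ n ih =>
      change t ∈ (g.op Y ΓT)^[n + 1] ∅ at hn
      rw [Function.iterate_succ_apply', LfpGuard.mem_op] at hn
      rcases hn with hn | ⟨i, rfl⟩ | hn
      · exact ih thull hn
      · refine g.stage_subset_lfp Y ΓR 1 ?_
        rw [Function.iterate_one, LfpGuard.mem_op]
        exact Or.inr (Or.inl ⟨i, by rw [hg.tr_eq]⟩)
      · -- use the chosen derivation witnesses, which lie in the hull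
        have hwit := hcl (Sum.inr (ext, Y, g, n)) (t :: l) ?_
        swap
        · intro x hx
          rcases List.mem_cons.mp hx with rfl | hx
          · exact thull
          · exact hl x hx
        rw [wit] at hwit
        simp only [List.tail_cons, List.headD_cons, ← hΓT] at hwit
        erw [dif_pos hn] at hwit
        obtain ⟨h1, h2, h3⟩ := hn.choose_spec
        set ts := hn.choose with hts
        refine g.op_lfp Y ΓR ?_
        rw [LfpGuard.mem_op]
        refine Or.inr (Or.inr ⟨ts, fun i => ?_, ?_, h3⟩)
        · have hmem : ts i ∈ hull := hwit ⟨i, rfl⟩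
          by_cases hY : g.univRange i = SVar.var Y
          · rw [if_pos hY]
            have := h1 i
            rw [if_pos hY] at this
            exact ih hmem this
          · rw [if_neg hY, hg.so_eq _ (hXa i)]
            have := h1 i
            rw [if_neg hY] at this
            exact ⟨this, hmem⟩
        · rw [hg.tr_eq]
          exact h2

end Hull


section Main

lemma goodPair_applyExt {T hull : Set (Trace α)}
    (hcl : ∀ i l, (∀ x ∈ l, x ∈ hull) → wit T i l ⊆ hull) (he : etr ∈ hull) :
    ∀ ext : Ext α, ext.OK → ∀ l, (∀ x ∈ l, x ∈ hull) →
      GoodPair hull (applyExt (initAssign T) ext l)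
        (applyExt (initAssign (T ∩ hull)) ext l) := by
  intro ext
  induction ext with
  | nil =>
    intro _ l _
    refine ⟨rfl, fun π => he, ?_, subset_rfl⟩
    intro X hX
    cases X with
    | all => exact absurd rfl hX
    | dis => rfl
    | var n => simp [applyExt, initAssign]
  | tr π r ih =>
    intro hOK l hl
    have hd : l.headD etr ∈ hull := by
      cases l with
      | nil => exact he
      | cons a l => exact hl a (List.mem_cons_self)
    have htl : ∀ x ∈ l.tail, x ∈ hull := by
      cases l with
      | nil => simp
      | cons a l => exact fun x hx => hl x (List.mem_cons_of_mem _ hx)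
    have hg := ih hOK l.tail htl
    refine ⟨?_, ?_, hg.so_eq, hg.so_all⟩
    · simp only [applyExt, Assignment.updTr]
      rw [hg.tr_eq]
    · intro π'
      simp only [applyExt, Assignment.updTr]
      rcases eq_or_ne π' π with rfl | hne
      · rw [Function.update_self]
        exact hd
      · rw [Function.update_of_ne hne]
        exact hg.tr_mem π'
  | fx Y g r ih =>
    intro hOK l hl
    obtain ⟨hXa, hOK'⟩ := hOK
    have hg := ih hOK' l hl
    have habs := lfp_absolute hcl r l hl hg Y g hXa
    refine ⟨hg.tr_eq, hg.tr_mem, ?_, ?_⟩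
    · intro X hX
      simp only [applyExt, Assignment.updSo]
      rcases eq_or_ne X (SVar.var Y) with rfl | hne
      · rw [Function.update_self, Function.update_self]
        exact habs
      · rw [Function.update_of_ne hne, Function.update_of_ne hne]
        exact hg.so_eq X hX
    · simp only [applyExt, Assignment.updSo]
      rw [Function.update_of_ne (fun h => SVar.noConfusion h),
        Function.update_of_ne (fun h => SVar.noConfusion h)]
      exact hg.so_all

open Classical in
lemma sat_restrict {T hull : Set (Trace α)}
    (hcl : ∀ i l, (∀ x ∈ l, x ∈ hull) → wit T i l ⊆ hull) (he : etr ∈ hull) :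
    ∀ ψ : LfpFormula α, ψ.XaFree → ∀ ext : Ext α, ext.OK →
      ∀ l, (∀ x ∈ l, x ∈ hull) →
      ψ.sat (applyExt (initAssign T) ext l) →
      ψ.sat (applyExt (initAssign (T ∩ hull)) ext l) := by
  intro ψ
  induction ψ with
  | qf χ =>
    intro _ ext hOK l hl hsat
    have hg := goodPair_applyExt hcl he ext hOK l hl
    rw [LfpFormula.sat] at hsat ⊢
    rw [hg.tr_eq]
    exact hsat
  | existsTrace π X ψ ih =>
    intro hXa ext hOK l hl hsat
    obtain ⟨hXne, hXa'⟩ := hXa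
    have hg := goodPair_applyExt hcl he ext hOK l hl
    rw [LfpFormula.sat] at hsat ⊢
    have hwit := hcl (Sum.inl (ext, π, X, ψ)) l hl
    rw [wit, dif_pos hsat] at hwit
    obtain ⟨hmem, hsat'⟩ := hsat.choose_spec
    have ht0 : hsat.choose ∈ hull := hwit rfl
    refine ⟨hsat.choose, ?_, ?_⟩
    · rw [hg.so_eq X hXne]
      exact ⟨hmem, ht0⟩
    · have := ih hXa' (Ext.tr π ext) hOK (hsat.choose :: l) ?_ ?_
      · simpa [applyExt] using this
      · intro x hx
        rcases List.mem_cons.mp hx with rfl | hx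
        · exact ht0
        · exact hl x hx
      · simpa [applyExt] using hsat'
  | forallTrace π X ψ ih =>
    intro hXa ext hOK l hl hsat
    obtain ⟨hXne, hXa'⟩ := hXa
    have hg := goodPair_applyExt hcl he ext hOK l hl
    rw [LfpFormula.sat] at hsat ⊢
    intro t ht
    rw [hg.so_eq X hXne] at ht
    have := ih hXa' (Ext.tr π ext) hOK (t :: l) ?_ ?_
    · simpa [applyExt] using this
    · intro x hx
      rcases List.mem_cons.mp hx with rfl | hx
      · exact ht.2
      · exact hl x hx
    · simpa [applyExt] using hsat t ht.1
  | fix Y g ψ ih =>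
    intro hXa ext hOK l hl hsat
    obtain ⟨hXaG, hXa'⟩ := hXa
    rw [LfpFormula.sat] at hsat ⊢
    have := ih hXa' (Ext.fx Y g ext) ⟨hXaG, hOK⟩ l hl ?_
    · simpa [applyExt] using this
    · simpa [applyExt] using hsat

end Main


/-- Every satisfiable `Xₐ`-free lfp-Hyper²LTL_mm sentence has a countable
model; in fact, every model `T` of such a sentence contains a countable subset `R ⊆ T`
that is also a model of the sentence. -/
theorem lfp_xafree_countable_model (AP : Type) [Fintype AP] [Nonempty AP]
    (φ : LfpFormula AP) (hφ : φ.IsSentence) (hXa : φ.XaFree) :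
    ((∃ T : Set (Trace AP), LfpModels T φ) →
        ∃ T : Set (Trace AP), T.Countable ∧ LfpModels T φ) ∧
    (∀ T : Set (Trace AP), LfpModels T φ →
        ∃ R : Set (Trace AP), R ⊆ T ∧ R.Countable ∧ LfpModels R φ) := by
  have main : ∀ T : Set (Trace AP), LfpModels T φ →
      ∃ R : Set (Trace AP), R ⊆ T ∧ R.Countable ∧ LfpModels R φ := by
    intro T hT
    obtain ⟨hull, hbase, hc, hcl⟩ := exists_hull (wit T) (wit_countable T)
      {etr} (Set.countable_singleton _)
    have he : etr ∈ hull := hbase rfl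
    refine ⟨T ∩ hull, Set.inter_subset_left, hc.mono Set.inter_subset_right, ?_⟩
    exact sat_restrict hcl he φ hXa Ext.nil trivial [] (by simp) hT
  refine ⟨?_, main⟩
  rintro ⟨T, hT⟩
  obtain ⟨R, _, hc, hm⟩ := main T hT
  exact ⟨R, hc, hm⟩


end Hyper2
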